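/- Let p > 4 be prime and n = p. Then there is no input X ∈ {0,1}^p with Sen(f,X) = 0 for the simplified weighted sum function f; equivalently, every input has at least one sensitive coordinate. -/

import Mathlib

open Finset

/-- the weighted sum `s(X) = (∑ k, k·x_k) mod n`, as an element of `ZMod n`. -/
def wsS {n : ℕ} [NeZero n] (X : ZMod n → Bool) : ZMod n :=
  ∑ i : ZMod n, if X i then i else 0

/-- the simplified weighted sum function `f(X) = x_{s(X)}`. -/
def wsF {n : ℕ} [NeZero n] (X : ZMod n → Bool) : Bool := X (wsS X)

/-- the sensitivity `Sen(f, X)`: the number of coordinates whose flip changes `f`. -/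
def wsSens {n : ℕ} [NeZero n] (X : ZMod n → Bool) : ℕ :=
  (Finset.univ.filter fun i : ZMod n =>
    wsF (Function.update X i (!X i)) ≠ wsF X).card

lemma wsS_update {p : ℕ} [NeZero p] (X : ZMod p → Bool) (i : ZMod p) (b : Bool) :
    wsS (Function.update X i b) =
      wsS X - (if X i then i else 0) + (if b then i else 0) := by
  have key : ∀ c : Bool, wsS (Function.update X i c)
      = (if c then i else 0) + ∑ j ∈ Finset.univ \ {i}, (if X j then (j : ZMod p) else 0) := by
    intro c
    unfold wsS
    have h : ∀ j, (if Function.update X i c j then (j : ZMod p) else 0) =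
        Function.update (fun j => if X j then (j : ZMod p) else 0) i
          (if c then i else 0) j := by
      intro j
      rcases eq_or_ne j i with rfl | hj
      · simp
      · simp [Function.update_of_ne hj]
    rw [Finset.sum_congr rfl fun j _ => h j,
      Finset.sum_update_of_mem (Finset.mem_univ i)]
  have h1 := key b
  have h2 := key (X i)
  rw [Function.update_eq_self] at h2
  rw [h1, h2]; ring

theorem stmt_11 (p : ℕ) (hp : p.Prime) (hp4 : 4 < p) [NeZero p] :
    ¬ ∃ X : ZMod p → Bool, wsSens X = 0 := by
  haveI := Fact.mk hp
  rintro ⟨X, hX⟩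
  set s := wsS X with hs
  have H : ∀ i : ZMod p, wsF (Function.update X i (!X i)) = X s := by
    intro i
    by_contra h
    have hmem : i ∈ Finset.univ.filter (fun i : ZMod p =>
        wsF (Function.update X i (!X i)) ≠ wsF X) := by
      simp only [Finset.mem_filter, Finset.mem_univ, true_and]
      exact h
    rw [wsSens, Finset.card_eq_zero] at hX
    rw [hX] at hmem
    exact absurd hmem (Finset.notMem_empty i)
  have hs0 : s ≠ 0 := by
    intro h0
    have h := H 0
    have hup : wsS (Function.update X 0 (!X 0)) = s := by
      rw [wsS_update]; simp [← hs]
    rw [wsF, hup, h0, Function.update_self] at h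
    simp at h
  have keyA : ∀ i : ZMod p, i ≠ 0 → X i = false → X (s + i) = X s := by
    intro i hi hXi
    have h := H i
    have hne : s + i ≠ i := by
      intro hc
      exact hs0 (by rwa [add_eq_right] at hc)
    have hup : wsS (Function.update X i (!X i)) = s + i := by
      rw [wsS_update, hXi]; simp [← hs]
    rw [wsF, hup, Function.update_of_ne hne] at h
    exact h
  have keyB : ∀ i : ZMod p, X i = true → s - i ≠ i → X (s - i) = X s := by
    intro i hXi hne
    have h := H i
    have hup : wsS (Function.update X i (!X i)) = s - i := by
      rw [wsS_update, hXi]; simp [← hs]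
    rw [wsF, hup, Function.update_of_ne hne] at h
    exact h
  have keyT : ∀ i : ZMod p, X i = true → s - i = i → X s = false := by
    intro i hXi heq
    have h := H i
    have hup : wsS (Function.update X i (!X i)) = s - i := by
      rw [wsS_update, hXi]; simp [← hs]
    rw [wsF, hup, heq, Function.update_self, hXi] at h
    simpa using h.symm
  cases hb : X s with
  | false =>
    have hall : ∀ n : ℕ, X (((n + 1 : ℕ) : ZMod p) * s) = false := by
      intro n
      induction n with
      | zero => simpa using hb
      | succ n ih =>
        rcases eq_or_ne (((n + 1 : ℕ) : ZMod p) * s) 0 with h0 | h0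
        · have heq : ((n + 1 + 1 : ℕ) : ZMod p) * s = s := by
            have h1 : ((n + 1 + 1 : ℕ) : ZMod p) * s
                = ((n + 1 : ℕ) : ZMod p) * s + s := by push_cast; ring
            rw [h1, h0, zero_add]
          rw [heq]; exact hb
        · have h2 := keyA _ h0 ih
          rw [hb] at h2
          have h3 : s + ((n + 1 : ℕ) : ZMod p) * s = ((n + 1 + 1 : ℕ) : ZMod p) * s := by
            push_cast; ring
          rwa [h3] at h2
    have hallz : ∀ j : ZMod p, X j = false := by
      intro j
      rcases eq_or_ne j 0 with rfl | hj
      · have h4 := hall (p - 1)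
        rwa [Nat.sub_add_cancel (Nat.one_le_iff_ne_zero.mpr (NeZero.ne p)),
          ZMod.natCast_self, zero_mul] at h4
      · set c : ZMod p := j * s⁻¹ with hc
        have hc0 : c ≠ 0 := mul_ne_zero hj (inv_ne_zero hs0)
        have hcv : c.val ≠ 0 := by
          simpa [ZMod.val_eq_zero] using hc0
        have h4 := hall (c.val - 1)
        rw [Nat.sub_add_cancel (Nat.one_le_iff_ne_zero.mpr hcv)] at h4
        have h5 : ((c.val : ℕ) : ZMod p) = c := ZMod.natCast_rightInverse c
        rw [h5, hc, mul_assoc, inv_mul_cancel₀ hs0, mul_one] at h4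
        exact h4
    have hzero : s = 0 := by
      rw [hs]
      unfold wsS
      simp [hallz]
    exact hs0 hzero
  | true =>
    have hB : ∀ i : ZMod p, X i = true → X (s - i) = true ∧ s - i ≠ i := by
      intro i hXi
      have hne : s - i ≠ i := by
        intro heq
        have := keyT i hXi heq
        rw [hb] at this
        exact absurd this (by simp)
      refine ⟨?_, hne⟩
      rw [keyB i hXi hne, hb]
    have hT0 : X 0 = true := by
      have h4 := (hB s hb).1
      simpa using h4
    set T : Finset (ZMod p) := Finset.univ.filter (fun i : ZMod p => X i = true) with hT
    have hmemT : ∀ i : ZMod p, i ∈ T ↔ X i = true := by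
      intro i; simp [hT]
    have hsum : ∑ i ∈ T, (i : ZMod p) = s := by
      rw [hs]
      unfold wsS
      rw [hT, Finset.sum_filter]
    have himg : T.image (fun i => s - i) = T := by
      apply Finset.Subset.antisymm
      · intro j hj
        simp only [Finset.mem_image] at hj
        obtain ⟨i, hi, rfl⟩ := hj
        rw [hmemT] at hi ⊢
        exact (hB i hi).1
      · intro i hi
        simp only [Finset.mem_image]
        refine ⟨s - i, ?_, by ring⟩
        rw [hmemT] at hi ⊢
        exact (hB i hi).1
    have hsum2 : ∑ i ∈ T, (s - i) = s := by
      have hinj : ∀ x ∈ T, ∀ y ∈ T, s - x = s - y → x = y := by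
        intro a _ b _ h
        linear_combination -h
      have h4 := Finset.sum_image (f := fun x : ZMod p => x) hinj
      rw [himg, hsum] at h4
      exact h4.symm
    have hs2 : (T.card : ZMod p) * s - s = s := by
      calc (T.card : ZMod p) * s - s
          = ∑ i ∈ T, (s - i) := by
            rw [Finset.sum_sub_distrib, Finset.sum_const, hsum, nsmul_eq_mul]
        _ = s := hsum2
    have hcast : (T.card : ZMod p) = 2 := by
      have h2 : (T.card : ZMod p) * s = 2 * s := by linear_combination hs2
      exact mul_right_cancel₀ hs0 h2
    have hcard : T.card = 2 := by
      have hle : T.card ≤ p := by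
        have h5 := Finset.card_le_univ T
        simpa [Finset.card_univ, ZMod.card] using h5
      have hmod : T.card % p = 2 % p := by
        have h6 : ((T.card : ℕ) : ZMod p) = ((2 : ℕ) : ZMod p) := by
          exact_mod_cast hcast
        exact (ZMod.natCast_eq_natCast_iff' _ _ _).mp h6
      rw [show (2:ℕ) % p = 2 from Nat.mod_eq_of_lt (by omega)] at hmod
      rcases lt_or_eq_of_le hle with h | h
      · rwa [Nat.mod_eq_of_lt h] at hmod
      · rw [h, Nat.mod_self] at hmod; omega
    have hF : (Finset.univ.filter fun i : ZMod p => ¬ X i = true).card ≤ T.card := by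
      apply Finset.card_le_card_of_injOn (fun i => s + i)
      · intro i hi
        simp only [Finset.mem_coe, Finset.mem_filter, Finset.mem_univ, true_and] at hi
        have hXi : X i = false := by simpa using hi
        have hi0 : i ≠ 0 := by
          intro h
          rw [h, hT0] at hXi
          exact absurd hXi (by simp)
        have h7 := keyA i hi0 hXi
        rw [hb] at h7
        rw [Finset.mem_coe, hmemT]
        exact h7
      · intro a _ b _ h
        simpa using h
    have hpc : T.card + (Finset.univ.filter fun i : ZMod p => ¬ X i = true).card = p := by
      rw [hT, Finset.card_filter_add_card_filter_not, Finset.card_univ, ZMod.card]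
    omega
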